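/- Let f : Fin M → ℝ^N with indices partitioned into K pairwise disjoint pools I_1, …, I_K, each of cardinality L, and let P_∞ : ℝ^N → ℝ^K be the max-pooling operator (P_∞ x)_k = max_{j∈I_k} |⟨x, f_j⟩|. Then for all x, x' ∈ ℝ^N, d(x,x') · (inf over pairs of attained switches s, s' of A(s,s')) ≤ ‖P_∞(x) − P_∞(x')‖₂, where A(s,s') = ( min_{Ω ⊆ J(s,s')} [λ₋({f_{s_k}}_{k∈Ω})² + λ₋({f_{s_k}}_{k∈J(s,s')∖Ω})²] + (1/(4L)) · min_{Ω ⊆ J(s,s')ᶜ} [Λ_{s,s',Ω}² + Λ_{s,s',J(s,s')ᶜ∖Ω}²] )^{1/2}. -/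

import Mathlib

open scoped BigOperators RealInnerProductSpace
open Finset

noncomputable section

/-- Lower frame bound of the subfamily of `g` indexed by the finset `Ω`. -/
def lowerFrameBound {N : ℕ} {ι : Type*} (g : ι → EuclideanSpace ℝ (Fin N))
    (Ω : Finset ι) : ℝ :=
  sSup {c : ℝ | 0 ≤ c ∧ ∀ x : EuclideanSpace ℝ (Fin N),
    c * ‖x‖ ≤ Real.sqrt (∑ i ∈ Ω, ⟪x, g i⟫ ^ 2)}

/-- Sign-invariant distance `d(x,x') = min(‖x−x'‖, ‖x+x'‖)`. -/
def sdist {N : ℕ} (x x' : EuclideanSpace ℝ (Fin N)) : ℝ :=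
  min ‖x - x'‖ ‖x + x'‖

/-- A switch assigns to each pool an index of that pool. -/
def IsSwitch {M K : ℕ} (I : Fin K → Finset (Fin M)) (s : Fin K → Fin M) : Prop :=
  ∀ k, s k ∈ I k

/-- The cone of a switch `s`: signals whose pool-wise maximal absolute responses are
attained at the indices `s_k`. -/
def cone {N M K : ℕ} (f : Fin M → EuclideanSpace ℝ (Fin N))
    (I : Fin K → Finset (Fin M)) (s : Fin K → Fin M) : Set (EuclideanSpace ℝ (Fin N)) :=
  {x | ∀ k, ∀ j ∈ I k, |⟪x, f j⟫| ≤ |⟪x, f (s k)⟫|}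

/-- The acute angle `θ(u,v) = arccos(|⟨u,v⟩|/(‖u‖·‖v‖))`. -/
def theta {H : Type*} [NormedAddCommGroup H] [InnerProductSpace ℝ H] (u v : H) : ℝ :=
  Real.arccos (|⟪u, v⟫| / (‖u‖ * ‖v‖))

/-- The `Ω`-restricted switch measurement map `x ↦ (⟨x, g k⟩)_{k ∈ Ω}`. -/
def restrMap {N K : ℕ} (g : Fin K → EuclideanSpace ℝ (Fin N)) (Ω : Finset (Fin K))
    (x : EuclideanSpace ℝ (Fin N)) : EuclideanSpace ℝ Ω :=
  WithLp.toLp 2 (fun k : Ω => ⟪x, g k⟫)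

/-- `β(s,s',Ω)`: infimum of the angles between nonzero vectors in the images of the
cones of `s` and `s'` under the `Ω`-restricted switch measurement maps. -/
def beta {N M K : ℕ} (f : Fin M → EuclideanSpace ℝ (Fin N))
    (I : Fin K → Finset (Fin M)) (s s' : Fin K → Fin M) (Ω : Finset (Fin K)) : ℝ :=
  sInf {t : ℝ | ∃ u v : EuclideanSpace ℝ Ω, u ≠ 0 ∧ v ≠ 0 ∧
    (∃ x ∈ cone f I s, u = restrMap (fun k => f (s k)) Ω x) ∧
    (∃ x' ∈ cone f I s', v = restrMap (fun k => f (s' k)) Ω x') ∧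
    t = theta u v}

/-- `Λ_{s,s',Ω} = λ₋(F_{⋃_{k∈Ω} I_k}) · sin β(s,s',Ω)`. -/
def Lam {N M K : ℕ} (f : Fin M → EuclideanSpace ℝ (Fin N))
    (I : Fin K → Finset (Fin M)) (s s' : Fin K → Fin M) (Ω : Finset (Fin K)) : ℝ :=
  lowerFrameBound f (Ω.biUnion I) * Real.sin (beta f I s s' Ω)

/-- `J(s,s') = {k : s_k = s'_k}`. -/
def Jset {M K : ℕ} (s s' : Fin K → Fin M) : Finset (Fin K) :=
  univ.filter fun k => s k = s' k

/-- The constant `A(s,s')` of Proposition `mpooling_prop`. -/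
def Aconst {N M K : ℕ} (L : ℕ) (f : Fin M → EuclideanSpace ℝ (Fin N))
    (I : Fin K → Finset (Fin M)) (s s' : Fin K → Fin M) : ℝ :=
  Real.sqrt (
    sInf {r : ℝ | ∃ Ω ⊆ Jset s s',
        r = lowerFrameBound (fun k => f (s k)) Ω ^ 2 +
            lowerFrameBound (fun k => f (s k)) (Jset s s' \ Ω) ^ 2} +
    (1 / (4 * (L : ℝ))) *
      sInf {r : ℝ | ∃ Ω ⊆ (Jset s s')ᶜ,
        r = Lam f I s s' Ω ^ 2 + Lam f I s s' ((Jset s s')ᶜ \ Ω) ^ 2})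

/-- The max-pooling operator `(P_∞ x)_k = max_{j∈I_k} |⟨x, f_j⟩|`. -/
def maxPool {N M K : ℕ} (f : Fin M → EuclideanSpace ℝ (Fin N))
    (I : Fin K → Finset (Fin M)) (hne : ∀ k, (I k).Nonempty)
    (x : EuclideanSpace ℝ (Fin N)) : Fin K → ℝ :=
  fun k => (I k).sup' (hne k) fun j => |⟪x, f j⟫|


lemma lfb_nonneg {N : ℕ} {ι : Type*} (g : ι → EuclideanSpace ℝ (Fin N)) (Ω : Finset ι) :
    0 ≤ lowerFrameBound g Ω := by
  unfold lowerFrameBound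
  by_cases h : BddAbove {c : ℝ | 0 ≤ c ∧ ∀ x : EuclideanSpace ℝ (Fin N),
      c * ‖x‖ ≤ Real.sqrt (∑ i ∈ Ω, ⟪x, g i⟫ ^ 2)}
  · exact le_csSup h ⟨le_refl 0, fun x => by rw [zero_mul]; exact Real.sqrt_nonneg _⟩
  · rw [Real.sSup_of_not_bddAbove h]

lemma lfb_le {N : ℕ} {ι : Type*} (g : ι → EuclideanSpace ℝ (Fin N)) (Ω : Finset ι)
    (x : EuclideanSpace ℝ (Fin N)) :
    lowerFrameBound g Ω * ‖x‖ ≤ Real.sqrt (∑ i ∈ Ω, ⟪x, g i⟫ ^ 2) := by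
  by_cases hx : ‖x‖ = 0
  · rw [hx, mul_zero]; exact Real.sqrt_nonneg _
  · have hx' : 0 < ‖x‖ := lt_of_le_of_ne (norm_nonneg x) (Ne.symm hx)
    have h1 : lowerFrameBound g Ω ≤ Real.sqrt (∑ i ∈ Ω, ⟪x, g i⟫ ^ 2) / ‖x‖ := by
      refine csSup_le ⟨0, le_refl 0, fun y => by rw [zero_mul]; exact Real.sqrt_nonneg _⟩ ?_
      exact fun c hc => (le_div_iff₀ hx').mpr (hc.2 x)
    exact (le_div_iff₀ hx').mp h1

lemma lfb_sq_le {N : ℕ} {ι : Type*} (g : ι → EuclideanSpace ℝ (Fin N)) (Ω : Finset ι)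
    (x : EuclideanSpace ℝ (Fin N)) :
    lowerFrameBound g Ω ^ 2 * ‖x‖ ^ 2 ≤ ∑ i ∈ Ω, ⟪x, g i⟫ ^ 2 := by
  have h1 := lfb_le g Ω x
  have h2 : (lowerFrameBound g Ω * ‖x‖) ^ 2 ≤ Real.sqrt (∑ i ∈ Ω, ⟪x, g i⟫ ^ 2) ^ 2 :=
    pow_le_pow_left₀ (mul_nonneg (lfb_nonneg g Ω) (norm_nonneg x)) h1 2
  rwa [Real.sq_sqrt (by positivity), mul_pow] at h2

lemma key1 (a b : ℝ) (h : (a - b) ^ 2 ≤ (a + b) ^ 2) : (a - b) ^ 2 ≤ (|a| - |b|) ^ 2 := by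
  have hab : 0 ≤ a * b := by nlinarith
  have h1 : |a| * |b| = a * b := by rw [← abs_mul, abs_of_nonneg hab]
  nlinarith [sq_abs a, sq_abs b]

lemma key2 (a b : ℝ) (h : ¬ (a - b) ^ 2 ≤ (a + b) ^ 2) : (a + b) ^ 2 ≤ (|a| - |b|) ^ 2 := by
  push_neg at h
  have hab : a * b ≤ 0 := by nlinarith
  have h1 : |a| * |b| = -(a * b) := by rw [← abs_mul, abs_of_nonpos hab]
  nlinarith [sq_abs a, sq_abs b]




lemma lemD {ι : Type*} [Fintype ι] (U V : EuclideanSpace ℝ ι) (ε : ℝ) (hε : ε = 1 ∨ ε = -1) :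
    ‖U‖ ^ 2 * (1 - (|⟪U, V⟫| / (‖U‖ * ‖V‖)) ^ 2) ≤ ‖U + ε • V‖ ^ 2 := by
  have hε2 : ε ^ 2 = 1 := by rcases hε with h | h <;> rw [h] <;> norm_num
  have hnorm : ‖U + ε • V‖ ^ 2 = ‖U‖ ^ 2 + 2 * (ε * ⟪U, V⟫) + ‖V‖ ^ 2 := by
    rw [norm_add_sq_real, real_inner_smul_right, norm_smul, mul_pow, Real.norm_eq_abs,
      sq_abs, hε2, one_mul]
  set q : ℝ := |⟪U, V⟫| with hqdef
  have hq0 : 0 ≤ q := abs_nonneg _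
  by_cases hV : ‖V‖ = 0
  · have hV0 : V = 0 := norm_eq_zero.mp hV
    simp [hV0, hnorm, hqdef]
  by_cases hU : ‖U‖ = 0
  · nlinarith [sq_nonneg ‖U + ε • V‖, sq_nonneg (q / (‖U‖ * ‖V‖)), hU]
  have ha : 0 < ‖U‖ := lt_of_le_of_ne (norm_nonneg U) (Ne.symm hU)
  have hb : 0 < ‖V‖ := lt_of_le_of_ne (norm_nonneg V) (Ne.symm hV)
  have hp : q ≤ ‖U‖ * ‖V‖ := abs_real_inner_le_norm U V
  have hεp : -q ≤ ε * ⟪U, V⟫ := by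
    rcases hε with h | h <;> rw [h]
    · rw [one_mul]; exact neg_abs_le _
    · rw [neg_one_mul, neg_le_neg_iff]; exact le_abs_self _
  have hq2 : q ^ 2 = (⟪U, V⟫ : ℝ) ^ 2 := sq_abs _
  have eL : ‖U‖ ^ 2 * (1 - (q / (‖U‖ * ‖V‖)) ^ 2) = ‖U‖ ^ 2 - q ^ 2 / ‖V‖ ^ 2 := by
    field_simp
  have e : (q / ‖V‖ - ‖V‖) ^ 2 = q ^ 2 / ‖V‖ ^ 2 - 2 * q + ‖V‖ ^ 2 := by
    field_simp; ring
  nlinarith [sq_nonneg (q / ‖V‖ - ‖V‖)]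

lemma lemD' {ι : Type*} [Fintype ι] (U V : EuclideanSpace ℝ ι) (ε : ℝ) (hε : ε = 1 ∨ ε = -1) :
    ‖V‖ ^ 2 * (1 - (|⟪U, V⟫| / (‖U‖ * ‖V‖)) ^ 2) ≤ ‖U + ε • V‖ ^ 2 := by
  have h := lemD V U ε hε
  have h1 : (⟪V, U⟫ : ℝ) = ⟪U, V⟫ := (real_inner_comm V U).symm
  have h2 : ‖V + ε • U‖ = ‖U + ε • V‖ := by
    rcases hε with h | h <;> subst h
    · rw [one_smul, one_smul, add_comm]
    · rw [neg_one_smul, neg_one_smul, ← sub_eq_add_neg, ← sub_eq_add_neg, norm_sub_rev]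
  rwa [h1, h2, mul_comm ‖V‖ ‖U‖] at h

set_option maxHeartbeats 1000000 in
lemma piece {N M K L : ℕ} (f : Fin M → EuclideanSpace ℝ (Fin N))
    (I : Fin K → Finset (Fin M)) (hL : 0 < L)
    (hdisj : ∀ k k', k ≠ k' → Disjoint (I k) (I k'))
    (hcard : ∀ k, (I k).card = L)
    (s s' : Fin K → Fin M)
    (x x' : EuclideanSpace ℝ (Fin N)) (hx : x ∈ cone f I s) (hx' : x' ∈ cone f I s')
    (W : Finset (Fin K)) (ε : ℝ) (hε : ε = 1 ∨ ε = -1) :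
    sdist x x' ^ 2 * Lam f I s s' W ^ 2 ≤
      4 * L * ∑ k ∈ W, (⟪x, f (s k)⟫ + ε * ⟪x', f (s' k)⟫) ^ 2 := by
  classical
  obtain ⟨U, hUdef⟩ : ∃ u : EuclideanSpace ℝ ↥W, u = restrMap (fun k => f (s k)) W x := ⟨_, rfl⟩
  obtain ⟨V, hVdef⟩ : ∃ v : EuclideanSpace ℝ ↥W, v = restrMap (fun k => f (s' k)) W x' := ⟨_, rfl⟩
  obtain ⟨lam, hlamdef⟩ : ∃ l : ℝ, l = lowerFrameBound f (W.biUnion I) := ⟨_, rfl⟩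
  obtain ⟨a, hadef⟩ : ∃ a : ℝ, a = ‖U‖ := ⟨_, rfl⟩
  obtain ⟨b, hbdef⟩ : ∃ b : ℝ, b = ‖V‖ := ⟨_, rfl⟩
  have hlam0 : 0 ≤ lam := hlamdef ▸ lfb_nonneg _ _
  have ha0 : 0 ≤ a := hadef ▸ norm_nonneg _
  have hb0 : 0 ≤ b := hbdef ▸ norm_nonneg _
  have hU2 : a ^ 2 = ∑ k ∈ W, (⟪x, f (s k)⟫ : ℝ) ^ 2 := by
    rw [hadef, hUdef, EuclideanSpace.norm_eq, Real.sq_sqrt (by positivity),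
      ← Finset.sum_coe_sort W fun k => (⟪x, f (s k)⟫ : ℝ) ^ 2]
    exact Finset.sum_congr rfl fun i _ => by
      simp [restrMap, Real.norm_eq_abs, sq_abs]
  have hV2 : b ^ 2 = ∑ k ∈ W, (⟪x', f (s' k)⟫ : ℝ) ^ 2 := by
    rw [hbdef, hVdef, EuclideanSpace.norm_eq, Real.sq_sqrt (by positivity),
      ← Finset.sum_coe_sort W fun k => (⟪x', f (s' k)⟫ : ℝ) ^ 2]
    exact Finset.sum_congr rfl fun i _ => by
      simp [restrMap, Real.norm_eq_abs, sq_abs]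
  obtain ⟨T, hTdef⟩ : ∃ t : ℝ, t = ‖U + ε • V‖ ^ 2 := ⟨_, rfl⟩
  have hT0 : 0 ≤ T := hTdef ▸ sq_nonneg _
  have hSum : ∑ k ∈ W, ((⟪x, f (s k)⟫ : ℝ) + ε * ⟪x', f (s' k)⟫) ^ 2 = T := by
    rw [hTdef, hUdef, hVdef, EuclideanSpace.norm_eq, Real.sq_sqrt (by positivity),
      ← Finset.sum_coe_sort W fun k => ((⟪x, f (s k)⟫ : ℝ) + ε * ⟪x', f (s' k)⟫) ^ 2]
    exact Finset.sum_congr rfl fun i _ => by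
      simp [restrMap, Real.norm_eq_abs, sq_abs]
  have hframe : ∀ (y : EuclideanSpace ℝ (Fin N)) (t : Fin K → Fin M), y ∈ cone f I t →
      lam ^ 2 * ‖y‖ ^ 2 ≤ (L : ℝ) * ∑ k ∈ W, (⟪y, f (t k)⟫ : ℝ) ^ 2 := by
    intro y t hy
    calc lam ^ 2 * ‖y‖ ^ 2 ≤ ∑ j ∈ W.biUnion I, (⟪y, f j⟫ : ℝ) ^ 2 := hlamdef ▸ lfb_sq_le f _ y
      _ = ∑ k ∈ W, ∑ j ∈ I k, (⟪y, f j⟫ : ℝ) ^ 2 :=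
          Finset.sum_biUnion (fun k _ k' _ hkk' => hdisj k k' hkk')
      _ ≤ ∑ k ∈ W, (L : ℝ) * (⟪y, f (t k)⟫ : ℝ) ^ 2 := by
          refine Finset.sum_le_sum fun k _ => ?_
          calc ∑ j ∈ I k, (⟪y, f j⟫ : ℝ) ^ 2 ≤ ∑ j ∈ I k, (⟪y, f (t k)⟫ : ℝ) ^ 2 := by
                refine Finset.sum_le_sum fun j hj => ?_
                have h1 := hy k j hj
                nlinarith [abs_nonneg (⟪y, f j⟫ : ℝ), sq_abs (⟪y, f j⟫ : ℝ),
                  sq_abs (⟪y, f (t k)⟫ : ℝ)]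
            _ = (L : ℝ) * (⟪y, f (t k)⟫ : ℝ) ^ 2 := by
                rw [Finset.sum_const, hcard k, nsmul_eq_mul]
      _ = (L : ℝ) * ∑ k ∈ W, (⟪y, f (t k)⟫ : ℝ) ^ 2 := (Finset.mul_sum _ _ _).symm
  have hFU : lam ^ 2 * ‖x‖ ^ 2 ≤ (L : ℝ) * a ^ 2 := by rw [hU2]; exact hframe x s hx
  have hFV : lam ^ 2 * ‖x'‖ ^ 2 ≤ (L : ℝ) * b ^ 2 := by rw [hV2]; exact hframe x' s' hx'
  have hd0 : 0 ≤ sdist x x' := le_min (norm_nonneg _) (norm_nonneg _)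
  have hd : sdist x x' ≤ ‖x‖ + ‖x'‖ := le_trans (min_le_left _ _) (norm_sub_le x x')
  have hL0 : (0 : ℝ) ≤ (L : ℝ) := Nat.cast_nonneg L
  rw [hSum]
  obtain ⟨sβ, hsβdef⟩ : ∃ r : ℝ, r = Real.sin (beta f I s s' W) := ⟨_, rfl⟩
  have hLam : Lam f I s s' W = lam * sβ := by rw [Lam, ← hlamdef, hsβdef]
  rw [hLam]
  have hs1 : sβ ^ 2 ≤ 1 := by
    rw [hsβdef]; nlinarith [Real.sin_le_one (beta f I s s' W), Real.neg_one_le_sin (beta f I s s' W)]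
  have hdsq : sdist x x' ^ 2 ≤ 2 * ‖x‖ ^ 2 + 2 * ‖x'‖ ^ 2 := by
    nlinarith [sq_nonneg (‖x‖ - ‖x'‖)]
  have step2 : lam ^ 2 * sdist x x' ^ 2 ≤ 2 * L * a ^ 2 + 2 * L * b ^ 2 := by
    nlinarith [mul_le_mul_of_nonneg_left hdsq (sq_nonneg lam)]
  by_cases hU0 : U = 0
  · have hUn : a = 0 := by rw [hadef, hU0, norm_zero]
    have hTV : T = b ^ 2 := by
      rw [hTdef, hbdef, hU0, zero_add, norm_smul, Real.norm_eq_abs, mul_pow, sq_abs]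
      rcases hε with h | h <;> rw [h] <;> ring
    have ha2 : 2 * (L:ℝ) * a ^ 2 = 0 := by rw [hUn]; ring
    have step2' : lam ^ 2 * sdist x x' ^ 2 ≤ 2 * L * b ^ 2 := by linarith
    have h5 : sdist x x' ^ 2 * (lam * sβ) ^ 2 = lam ^ 2 * sdist x x' ^ 2 * sβ ^ 2 := by ring
    rw [h5]
    have h6 : lam ^ 2 * sdist x x' ^ 2 * sβ ^ 2 ≤ 2 * L * b ^ 2 * 1 :=
      mul_le_mul step2' hs1 (sq_nonneg sβ) (by positivity)
    have h7 : (0:ℝ) ≤ L * b ^ 2 := mul_nonneg hL0 (sq_nonneg b)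
    rw [hTV]
    linarith
  by_cases hV0 : V = 0
  · have hVn : b = 0 := by rw [hbdef, hV0, norm_zero]
    have hTV : T = a ^ 2 := by rw [hTdef, hadef, hV0, smul_zero, add_zero]
    have hb2 : 2 * (L:ℝ) * b ^ 2 = 0 := by rw [hVn]; ring
    have step2' : lam ^ 2 * sdist x x' ^ 2 ≤ 2 * L * a ^ 2 := by linarith
    have h5 : sdist x x' ^ 2 * (lam * sβ) ^ 2 = lam ^ 2 * sdist x x' ^ 2 * sβ ^ 2 := by ring
    rw [h5]
    have h6 : lam ^ 2 * sdist x x' ^ 2 * sβ ^ 2 ≤ 2 * L * a ^ 2 * 1 :=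
      mul_le_mul step2' hs1 (sq_nonneg sβ) (by positivity)
    have h7 : (0:ℝ) ≤ L * a ^ 2 := mul_nonneg hL0 (sq_nonneg a)
    rw [hTV]
    linarith
  · -- both nonzero
    obtain ⟨c, hcdef⟩ : ∃ c : ℝ, c = |(⟪U, V⟫ : ℝ)| / (‖U‖ * ‖V‖) := ⟨_, rfl⟩
    have hUp : 0 < ‖U‖ := norm_pos_iff.mpr hU0
    have hVp : 0 < ‖V‖ := norm_pos_iff.mpr hV0
    have hc0 : 0 ≤ c := hcdef ▸ div_nonneg (abs_nonneg _) (by positivity)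
    have hc1 : c ≤ 1 := by
      rw [hcdef, div_le_one (by positivity)]
      exact abs_real_inner_le_norm U V
    have hmem : theta U V ∈ {t : ℝ | ∃ u v : EuclideanSpace ℝ ↥W, u ≠ 0 ∧ v ≠ 0 ∧
        (∃ y ∈ cone f I s, u = restrMap (fun k => f (s k)) W y) ∧
        (∃ y' ∈ cone f I s', v = restrMap (fun k => f (s' k)) W y') ∧
        t = theta u v} := ⟨U, V, hU0, hV0, ⟨x, hx, hUdef⟩, ⟨x', hx', hVdef⟩, rfl⟩
    have hlb : ∀ t ∈ {t : ℝ | ∃ u v : EuclideanSpace ℝ ↥W, u ≠ 0 ∧ v ≠ 0 ∧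
        (∃ y ∈ cone f I s, u = restrMap (fun k => f (s k)) W y) ∧
        (∃ y' ∈ cone f I s', v = restrMap (fun k => f (s' k)) W y') ∧
        t = theta u v}, 0 ≤ t := by
      rintro t ⟨u, v, _, _, _, _, rfl⟩
      exact Real.arccos_nonneg _
    have hβ0 : 0 ≤ beta f I s s' W := le_csInf ⟨_, hmem⟩ hlb
    have hβθ : beta f I s s' W ≤ theta U V := csInf_le ⟨0, hlb⟩ hmem
    have hθc : theta U V = Real.arccos c := by rw [theta, hcdef]
    have hθ2 : theta U V ≤ Real.pi / 2 := by
      rw [hθc]; exact Real.arccos_le_pi_div_two.mpr hc0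
    have hpi := Real.pi_pos
    have hθ0 : 0 ≤ theta U V := by rw [hθc]; exact Real.arccos_nonneg c
    have hsin_mono : Real.sin (beta f I s s' W) ≤ Real.sin (theta U V) :=
      Real.strictMonoOn_sin.monotoneOn ⟨by linarith, by linarith⟩
        ⟨by linarith, hθ2⟩ hβθ
    have hsβ0 : 0 ≤ sβ := by
      rw [hsβdef]
      exact Real.sin_nonneg_of_nonneg_of_le_pi hβ0 (by linarith)
    have hsinθ2 : Real.sin (theta U V) ^ 2 = 1 - c ^ 2 := by
      rw [hθc, Real.sin_arccos, Real.sq_sqrt (by nlinarith)]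
    have hsβ2 : sβ ^ 2 ≤ 1 - c ^ 2 := by
      rw [hsβdef]
      nlinarith [pow_le_pow_left₀ (hsβdef ▸ hsβ0) hsin_mono 2]
    have hA : a ^ 2 * (1 - c ^ 2) ≤ T := by
      have h := lemD U V ε hε
      rw [← hcdef, ← hadef, ← hTdef] at h
      exact h
    have hB : b ^ 2 * (1 - c ^ 2) ≤ T := by
      have h := lemD' U V ε hε
      rw [← hcdef, ← hbdef, ← hTdef] at h
      exact h
    have h1c0 : 0 ≤ 1 - c ^ 2 := by nlinarith
    have step3 : (1 - c ^ 2) * (lam ^ 2 * sdist x x' ^ 2) ≤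
        (1 - c ^ 2) * (2 * L * a ^ 2 + 2 * L * b ^ 2) :=
      mul_le_mul_of_nonneg_left step2 h1c0
    clear hmem hlb hUdef hVdef hU2 hV2 hSum hframe hTdef
    have m1 := mul_le_mul_of_nonneg_left hA (by positivity : (0:ℝ) ≤ 2 * L)
    have m2 := mul_le_mul_of_nonneg_left hB (by positivity : (0:ℝ) ≤ 2 * L)
    have step4 : (1 - c ^ 2) * (2 * L * a ^ 2 + 2 * L * b ^ 2) ≤ 4 * L * T := by
      nlinarith [m1, m2]
    have hfin1 : sdist x x' ^ 2 * (lam * sβ) ^ 2 = sβ ^ 2 * (lam ^ 2 * sdist x x' ^ 2) := by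
      ring
    have hfin2 := mul_le_mul_of_nonneg_right hsβ2
      (mul_nonneg (sq_nonneg lam) (sq_nonneg (sdist x x')))
    rw [hfin1]
    linarith

set_option maxHeartbeats 1000000 in
/-- lower Lipschitz bound for the max-pooling operator. -/
theorem maxPool_lower_lipschitz {N M K L : ℕ} (f : Fin M → EuclideanSpace ℝ (Fin N))
    (I : Fin K → Finset (Fin M)) (hL : 0 < L)
    (hdisj : ∀ k k', k ≠ k' → Disjoint (I k) (I k'))
    (hcard : ∀ k, (I k).card = L)
    (hcover : ∀ j : Fin M, ∃ k, j ∈ I k)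
    (hne : ∀ k, (I k).Nonempty) :
    ∀ x x' : EuclideanSpace ℝ (Fin N),
      sdist x x' *
        sInf {a : ℝ | ∃ s s' : Fin K → Fin M,
          IsSwitch I s ∧ IsSwitch I s' ∧
          (∃ y, y ∈ cone f I s) ∧ (∃ y', y' ∈ cone f I s') ∧
          a = Aconst L f I s s'}
      ≤ Real.sqrt (∑ k, (maxPool f I hne x k - maxPool f I hne x' k) ^ 2) := by
  classical
  intro x x'
  have hsx : ∀ k, ∃ j ∈ I k, ∀ i ∈ I k, |⟪x, f i⟫| ≤ |⟪x, f j⟫| :=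
    fun k => Finset.exists_max_image (I k) (fun j => |⟪x, f j⟫|) (hne k)
  choose s hsmem hsmax using hsx
  have hsx' : ∀ k, ∃ j ∈ I k, ∀ i ∈ I k, |⟪x', f i⟫| ≤ |⟪x', f j⟫| :=
    fun k => Finset.exists_max_image (I k) (fun j => |⟪x', f j⟫|) (hne k)
  choose t htmem htmax using hsx'
  have hxcone : x ∈ cone f I s := fun k j hj => hsmax k j hj
  have hx'cone : x' ∈ cone f I t := fun k j hj => htmax k j hj
  have hPx : ∀ k, maxPool f I hne x k = |⟪x, f (s k)⟫| := by
    intro k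
    unfold maxPool
    exact le_antisymm (Finset.sup'_le _ _ (fun j hj => hsmax k j hj))
      (Finset.le_sup' (fun j => |⟪x, f j⟫|) (hsmem k))
  have hPx' : ∀ k, maxPool f I hne x' k = |⟪x', f (t k)⟫| := by
    intro k
    unfold maxPool
    exact le_antisymm (Finset.sup'_le _ _ (fun j hj => htmax k j hj))
      (Finset.le_sup' (fun j => |⟪x', f j⟫|) (htmem k))
  have hd0 : 0 ≤ sdist x x' := le_min (norm_nonneg _) (norm_nonneg _)
  have houter : sInf {a : ℝ | ∃ s s' : Fin K → Fin M,
      IsSwitch I s ∧ IsSwitch I s' ∧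
      (∃ y, y ∈ cone f I s) ∧ (∃ y', y' ∈ cone f I s') ∧
      a = Aconst L f I s s'} ≤ Aconst L f I s t := by
    apply csInf_le
    · refine ⟨0, ?_⟩
      rintro a ⟨s1, s2, _, _, _, _, rfl⟩
      exact Real.sqrt_nonneg _
    · exact ⟨s, t, hsmem, htmem, ⟨x, hxcone⟩, ⟨x', hx'cone⟩, rfl⟩
  refine le_trans (mul_le_mul_of_nonneg_left houter hd0) ?_
  -- notation
  set D : Fin K → ℝ := fun k => (maxPool f I hne x k - maxPool f I hne x' k) ^ 2 with hDdef
  have hDabs : ∀ k, D k = (|⟪x, f (s k)⟫| - |⟪x', f (t k)⟫|) ^ 2 := by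
    intro k; rw [hDdef]; simp only [hPx k, hPx' k]
  -- the two sign-split subsets
  set Ω1 : Finset (Fin K) := (Jset s t).filter
    (fun k => ((⟪x - x', f (s k)⟫ : ℝ)) ^ 2 ≤ ((⟪x + x', f (s k)⟫ : ℝ)) ^ 2) with hΩ1def
  set Ω2 : Finset (Fin K) := ((Jset s t)ᶜ).filter
    (fun k => ((⟪x, f (s k)⟫ : ℝ) - ⟪x', f (t k)⟫) ^ 2 ≤
      ((⟪x, f (s k)⟫ : ℝ) + ⟪x', f (t k)⟫) ^ 2) with hΩ2def
  -- bound the two inner infima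
  have hA1 : sInf {r : ℝ | ∃ Ω ⊆ Jset s t,
      r = lowerFrameBound (fun k => f (s k)) Ω ^ 2 +
          lowerFrameBound (fun k => f (s k)) (Jset s t \ Ω) ^ 2} ≤
      lowerFrameBound (fun k => f (s k)) Ω1 ^ 2 +
        lowerFrameBound (fun k => f (s k)) (Jset s t \ Ω1) ^ 2 := by
    apply csInf_le
    · refine ⟨0, ?_⟩; rintro r ⟨Ω, _, rfl⟩; positivity
    · exact ⟨Ω1, Finset.filter_subset _ _, rfl⟩
  have hA2 : sInf {r : ℝ | ∃ Ω ⊆ (Jset s t)ᶜ,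
      r = Lam f I s t Ω ^ 2 + Lam f I s t ((Jset s t)ᶜ \ Ω) ^ 2} ≤
      Lam f I s t Ω2 ^ 2 + Lam f I s t ((Jset s t)ᶜ \ Ω2) ^ 2 := by
    apply csInf_le
    · refine ⟨0, ?_⟩; rintro r ⟨Ω, _, rfl⟩; positivity
    · exact ⟨Ω2, Finset.filter_subset _ _, rfl⟩
  -- B1
  have hB1 : sdist x x' ^ 2 * lowerFrameBound (fun k => f (s k)) Ω1 ^ 2 ≤ ∑ k ∈ Ω1, D k := by
    have hterm : ∀ k ∈ Ω1, ((⟪x - x', f (s k)⟫ : ℝ)) ^ 2 ≤ D k := by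
      intro k hk
      obtain ⟨hkJ, hkp⟩ := Finset.mem_filter.mp hk
      have hst : s k = t k := by simpa [Jset] using hkJ
      have hsub : (⟪x - x', f (s k)⟫ : ℝ) = ⟪x, f (s k)⟫ - ⟪x', f (s k)⟫ :=
        inner_sub_left _ _ _
      have hadd : (⟪x + x', f (s k)⟫ : ℝ) = ⟪x, f (s k)⟫ + ⟪x', f (s k)⟫ :=
        inner_add_left _ _ _
      rw [hDabs k, ← hst, hsub]
      rw [hsub, hadd] at hkp
      exact key1 _ _ hkp
    calc sdist x x' ^ 2 * lowerFrameBound (fun k => f (s k)) Ω1 ^ 2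
        = lowerFrameBound (fun k => f (s k)) Ω1 ^ 2 * sdist x x' ^ 2 := by ring
      _ ≤ lowerFrameBound (fun k => f (s k)) Ω1 ^ 2 * ‖x - x'‖ ^ 2 :=
          mul_le_mul_of_nonneg_left
            (pow_le_pow_left₀ hd0 (min_le_left _ _) 2) (sq_nonneg _)
      _ ≤ ∑ k ∈ Ω1, ((⟪x - x', f (s k)⟫ : ℝ)) ^ 2 := lfb_sq_le _ _ _
      _ ≤ ∑ k ∈ Ω1, D k := Finset.sum_le_sum hterm
  -- B2
  have hB2 : sdist x x' ^ 2 * lowerFrameBound (fun k => f (s k)) (Jset s t \ Ω1) ^ 2 ≤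
      ∑ k ∈ Jset s t \ Ω1, D k := by
    have hterm : ∀ k ∈ Jset s t \ Ω1, ((⟪x + x', f (s k)⟫ : ℝ)) ^ 2 ≤ D k := by
      intro k hk
      obtain ⟨hkJ, hknot⟩ := Finset.mem_sdiff.mp hk
      have hst : s k = t k := by simpa [Jset] using hkJ
      have hkp : ¬ ((⟪x - x', f (s k)⟫ : ℝ)) ^ 2 ≤ ((⟪x + x', f (s k)⟫ : ℝ)) ^ 2 := by
        intro hcon
        exact hknot (Finset.mem_filter.mpr ⟨hkJ, hcon⟩)
      have hsub : (⟪x - x', f (s k)⟫ : ℝ) = ⟪x, f (s k)⟫ - ⟪x', f (s k)⟫ :=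
        inner_sub_left _ _ _
      have hadd : (⟪x + x', f (s k)⟫ : ℝ) = ⟪x, f (s k)⟫ + ⟪x', f (s k)⟫ :=
        inner_add_left _ _ _
      rw [hDabs k, ← hst, hadd]
      rw [hsub, hadd] at hkp
      exact key2 _ _ hkp
    calc sdist x x' ^ 2 * lowerFrameBound (fun k => f (s k)) (Jset s t \ Ω1) ^ 2
        = lowerFrameBound (fun k => f (s k)) (Jset s t \ Ω1) ^ 2 * sdist x x' ^ 2 := by ring
      _ ≤ lowerFrameBound (fun k => f (s k)) (Jset s t \ Ω1) ^ 2 * ‖x + x'‖ ^ 2 :=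
          mul_le_mul_of_nonneg_left
            (pow_le_pow_left₀ hd0 (min_le_right _ _) 2) (sq_nonneg _)
      _ ≤ ∑ k ∈ Jset s t \ Ω1, ((⟪x + x', f (s k)⟫ : ℝ)) ^ 2 := lfb_sq_le _ _ _
      _ ≤ ∑ k ∈ Jset s t \ Ω1, D k := Finset.sum_le_sum hterm
  -- B3
  have hB3 : sdist x x' ^ 2 * Lam f I s t Ω2 ^ 2 ≤ 4 * L * ∑ k ∈ Ω2, D k := by
    refine le_trans (piece f I hL hdisj hcard s t x x' hxcone hx'cone Ω2 (-1) (Or.inr rfl)) ?_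
    refine mul_le_mul_of_nonneg_left (Finset.sum_le_sum ?_) (by positivity)
    intro k hk
    obtain ⟨hkJ, hkp⟩ := Finset.mem_filter.mp hk
    rw [hDabs k]
    have h1 : ((⟪x, f (s k)⟫ : ℝ) + (-1) * ⟪x', f (t k)⟫) ^ 2 =
        ((⟪x, f (s k)⟫ : ℝ) - ⟪x', f (t k)⟫) ^ 2 := by ring
    rw [h1]
    exact key1 _ _ hkp
  -- B4
  have hB4 : sdist x x' ^ 2 * Lam f I s t ((Jset s t)ᶜ \ Ω2) ^ 2 ≤
      4 * L * ∑ k ∈ (Jset s t)ᶜ \ Ω2, D k := by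
    refine le_trans (piece f I hL hdisj hcard s t x x' hxcone hx'cone _ 1 (Or.inl rfl)) ?_
    refine mul_le_mul_of_nonneg_left (Finset.sum_le_sum ?_) (by positivity)
    intro k hk
    obtain ⟨hkJ, hknot⟩ := Finset.mem_sdiff.mp hk
    have hkp : ¬ ((⟪x, f (s k)⟫ : ℝ) - ⟪x', f (t k)⟫) ^ 2 ≤
        ((⟪x, f (s k)⟫ : ℝ) + ⟪x', f (t k)⟫) ^ 2 := by
      intro hcon
      exact hknot (Finset.mem_filter.mpr ⟨hkJ, hcon⟩)
    rw [hDabs k]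
    have h1 : ((⟪x, f (s k)⟫ : ℝ) + 1 * ⟪x', f (t k)⟫) ^ 2 =
        ((⟪x, f (s k)⟫ : ℝ) + ⟪x', f (t k)⟫) ^ 2 := by ring
    rw [h1]
    exact key2 _ _ hkp
  -- assemble sums
  have e1 : ∑ k ∈ Jset s t \ Ω1, D k + ∑ k ∈ Ω1, D k = ∑ k ∈ Jset s t, D k :=
    Finset.sum_sdiff (Finset.filter_subset _ _)
  have e2 : ∑ k ∈ (Jset s t)ᶜ \ Ω2, D k + ∑ k ∈ Ω2, D k = ∑ k ∈ (Jset s t)ᶜ, D k :=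
    Finset.sum_sdiff (Finset.filter_subset _ _)
  have e3 : ∑ k ∈ Jset s t, D k + ∑ k ∈ (Jset s t)ᶜ, D k = ∑ k, D k :=
    Finset.sum_add_sum_compl (Jset s t) D
  -- the quantity under the square root
  have hAconst : Aconst L f I s t = Real.sqrt
      (sInf {r : ℝ | ∃ Ω ⊆ Jset s t,
        r = lowerFrameBound (fun k => f (s k)) Ω ^ 2 +
            lowerFrameBound (fun k => f (s k)) (Jset s t \ Ω) ^ 2} +
      (1 / (4 * (L : ℝ))) *
        sInf {r : ℝ | ∃ Ω ⊆ (Jset s t)ᶜ,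
          r = Lam f I s t Ω ^ 2 + Lam f I s t ((Jset s t)ᶜ \ Ω) ^ 2}) := rfl
  rw [hAconst]
  have hL' : (0 : ℝ) < (L : ℝ) := by exact_mod_cast hL
  have hkey : sdist x x' ^ 2 *
      (sInf {r : ℝ | ∃ Ω ⊆ Jset s t,
        r = lowerFrameBound (fun k => f (s k)) Ω ^ 2 +
            lowerFrameBound (fun k => f (s k)) (Jset s t \ Ω) ^ 2} +
      (1 / (4 * (L : ℝ))) *
        sInf {r : ℝ | ∃ Ω ⊆ (Jset s t)ᶜ,
          r = Lam f I s t Ω ^ 2 + Lam f I s t ((Jset s t)ᶜ \ Ω) ^ 2}) ≤ ∑ k, D k := by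
    have c40 : (0 : ℝ) < 4 * (L : ℝ) := by linarith
    have hstep : sdist x x' ^ 2 *
        (sInf {r : ℝ | ∃ Ω ⊆ Jset s t,
          r = lowerFrameBound (fun k => f (s k)) Ω ^ 2 +
              lowerFrameBound (fun k => f (s k)) (Jset s t \ Ω) ^ 2} +
        (1 / (4 * (L : ℝ))) *
          sInf {r : ℝ | ∃ Ω ⊆ (Jset s t)ᶜ,
            r = Lam f I s t Ω ^ 2 + Lam f I s t ((Jset s t)ᶜ \ Ω) ^ 2}) ≤
        sdist x x' ^ 2 *
        ((lowerFrameBound (fun k => f (s k)) Ω1 ^ 2 +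
          lowerFrameBound (fun k => f (s k)) (Jset s t \ Ω1) ^ 2) +
        (1 / (4 * (L : ℝ))) *
          (Lam f I s t Ω2 ^ 2 + Lam f I s t ((Jset s t)ᶜ \ Ω2) ^ 2)) := by
      refine mul_le_mul_of_nonneg_left (add_le_add hA1 ?_) (sq_nonneg _)
      exact mul_le_mul_of_nonneg_left hA2 (by positivity)
    refine le_trans hstep ?_
    have h34 : (1 / (4 * (L : ℝ))) * (sdist x x' ^ 2 *
        (Lam f I s t Ω2 ^ 2 + Lam f I s t ((Jset s t)ᶜ \ Ω2) ^ 2)) ≤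
        ∑ k ∈ Ω2, D k + ∑ k ∈ (Jset s t)ᶜ \ Ω2, D k := by
      rw [div_mul_eq_mul_div, one_mul, div_le_iff₀ c40]
      nlinarith [hB3, hB4]
    nlinarith [hB1, hB2, h34, e1, e2, e3]
  -- conclude via square roots
  have hsqrt : sdist x x' * Real.sqrt
      (sInf {r : ℝ | ∃ Ω ⊆ Jset s t,
        r = lowerFrameBound (fun k => f (s k)) Ω ^ 2 +
            lowerFrameBound (fun k => f (s k)) (Jset s t \ Ω) ^ 2} +
      (1 / (4 * (L : ℝ))) *
        sInf {r : ℝ | ∃ Ω ⊆ (Jset s t)ᶜ,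
          r = Lam f I s t Ω ^ 2 + Lam f I s t ((Jset s t)ᶜ \ Ω) ^ 2}) =
      Real.sqrt (sdist x x' ^ 2 *
      (sInf {r : ℝ | ∃ Ω ⊆ Jset s t,
        r = lowerFrameBound (fun k => f (s k)) Ω ^ 2 +
            lowerFrameBound (fun k => f (s k)) (Jset s t \ Ω) ^ 2} +
      (1 / (4 * (L : ℝ))) *
        sInf {r : ℝ | ∃ Ω ⊆ (Jset s t)ᶜ,
          r = Lam f I s t Ω ^ 2 + Lam f I s t ((Jset s t)ᶜ \ Ω) ^ 2})) := by
    rw [Real.sqrt_mul (sq_nonneg _), Real.sqrt_sq hd0]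
  rw [hsqrt]
  exact Real.sqrt_le_sqrt hkey
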